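/- Let 𝒞 be a reduced (m,n,r)-scheme with m = 2r, and let X,Y be fibers of 𝒞 with X ≠ Y. Then: (i) d_T = 2 for every T ∈ ℛ_{X,Y}; (ii) d_R ∈ {1,2,4} for every R ∈ ℛ_X, and |{R ∈ ℛ_X : d_R = 1}| = 2·|{R ∈ ℛ_X : d_R = 4}|. -/
import Mathlib


open scoped Classical

namespace CCPaper

variable {V : Type*}

/-- The diagonal relation `Δ_X = {(x,x) : x ∈ X}` on a subset `X ⊆ V`. -/
def diag (X : Set V) : Set (V × V) := {p : V × V | p.1 ∈ X ∧ p.1 = p.2}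

/-- The transpose `R^t = {(v,u) : (u,v) ∈ R}` of a relation. -/
def transp (R : Set (V × V)) : Set (V × V) := Prod.swap ⁻¹' R

/-- The intersection number `|{w : (p.1,w) ∈ R, (w,p.2) ∈ S}|` at a pair `p`. -/
noncomputable def iNum (R S : Set (V × V)) (p : V × V) : ℕ :=
  Nat.card {w : V | (p.1, w) ∈ R ∧ (w, p.2) ∈ S}

/-- `ℛ` is a coherent configuration (scheme) on the finite set `V`:
(C1) `ℛ` consists of nonempty relations partitioning `V × V`;
(C2) the diagonal is a union of relations of `ℛ`;
(C3) `ℛ` is closed under transposition;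
(C4) intersection numbers are constant on each relation of `ℛ`. -/
def IsCC [Fintype V] (ℛ : Set (Set (V × V))) : Prop :=
  (∀ R ∈ ℛ, R.Nonempty) ∧
  (∀ p : V × V, ∃! R, R ∈ ℛ ∧ p ∈ R) ∧
  (∀ R ∈ ℛ, (∃ p ∈ R, p.1 = p.2) → ∀ p ∈ R, p.1 = p.2) ∧
  (∀ R ∈ ℛ, transp R ∈ ℛ) ∧
  (∀ R ∈ ℛ, ∀ S ∈ ℛ, ∀ T ∈ ℛ, ∀ p ∈ T, ∀ q ∈ T, iNum R S p = iNum R S q)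

/-- A fiber of the configuration: a nonempty `X ⊆ V` with `Δ_X ∈ ℛ`. -/
def IsFiber [Fintype V] (ℛ : Set (Set (V × V))) (X : Set V) : Prop :=
  X.Nonempty ∧ diag X ∈ ℛ

/-- `ℛ_{X,Y}`, the set of basis relations contained in `X × Y`. -/
def relsBtw [Fintype V] (ℛ : Set (Set (V × V))) (X Y : Set V) : Set (Set (V × V)) :=
  {R | R ∈ ℛ ∧ R ⊆ X ×ˢ Y}

/-- Out-degree `d_R = |R_out(x)|` (computed at a chosen point of `R`;
for a basis relation of a scheme this is independent of the point). -/
noncomputable def outDeg (R : Set (V × V)) : ℕ :=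
  if h : R.Nonempty then Nat.card {y : V | (h.choose.1, y) ∈ R} else 0

/-- In-degree `e_R = |R_in(y)|` (computed at a chosen point of `R`). -/
noncomputable def inDeg (R : Set (V × V)) : ℕ :=
  if h : R.Nonempty then Nat.card {x : V | (x, h.choose.2) ∈ R} else 0

/-- The structure constant `c_{RS}^T` (computed at a chosen pair of `T`). -/
noncomputable def sConst (R S T : Set (V × V)) : ℕ :=
  if h : T.Nonempty then iNum R S h.choose else 0

/-- The complex product `RS = {T ∈ ℛ : c_{RS}^T > 0}`. -/
def cProd [Fintype V] (ℛ : Set (Set (V × V))) (R S : Set (V × V)) : Set (Set (V × V)) :=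
  {T | T ∈ ℛ ∧ 0 < sConst R S T}

/-- A relation is thin if `d_R = e_R = 1`. -/
def IsThin (R : Set (V × V)) : Prop := outDeg R = 1 ∧ inDeg R = 1

/-- `ℛ` is `r`-balanced: `|ℛ_{X,Y}| = r` for all fibers `X, Y`. -/
def IsBalancedWith [Fintype V] (ℛ : Set (Set (V × V))) (r : ℕ) : Prop :=
  ∀ X Y : Set V, IsFiber ℛ X → IsFiber ℛ Y → Nat.card (relsBtw ℛ X Y) = r

/-- `ℛ` is balanced: `|ℛ_{X,Y}|` is the same for all pairs of fibers. -/
def IsBalanced [Fintype V] (ℛ : Set (Set (V × V))) : Prop := ∃ r : ℕ, IsBalancedWith ℛ r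

/-- An `(m,n,r)`-scheme: a coherent configuration which is `r`-balanced, all of whose
fibers have size `m`, and which has exactly `n` fibers. -/
def IsMNRScheme [Fintype V] (ℛ : Set (Set (V × V))) (m n r : ℕ) : Prop :=
  IsCC ℛ ∧ IsBalancedWith ℛ r ∧ (∀ X : Set V, IsFiber ℛ X → Nat.card X = m) ∧
    Nat.card {X : Set V | IsFiber ℛ X} = n

/-- A scheme is reduced if no basis relation between distinct fibers is thin. -/
def IsReduced [Fintype V] (ℛ : Set (Set (V × V))) : Prop :=
  ∀ X Y : Set V, IsFiber ℛ X → IsFiber ℛ Y → X ≠ Y → ∀ R ∈ relsBtw ℛ X Y, ¬ IsThin R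

/-- A (possibly empty) union of fibers. -/
def IsFiberUnion [Fintype V] (ℛ : Set (Set (V × V))) (U : Set V) : Prop :=
  ∃ F : Set (Set V), (∀ X ∈ F, IsFiber ℛ X) ∧ U = ⋃₀ F

/-- The adjacency matrix of a relation. -/
noncomputable def adjMat [Fintype V] (R : Set (V × V)) : Matrix V V ℂ :=
  fun u v => if (u, v) ∈ R then 1 else 0

/-- The diagonal idempotent `I_X` of a subset `X ⊆ V`. -/
noncomputable def idMat [Fintype V] (X : Set V) : Matrix V V ℂ :=
  fun u v => if u = v ∧ u ∈ X then 1 else 0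

/-- The adjacency algebra `𝒜(𝒞)`, the subalgebra of `Mat_V(ℂ)` spanned by the
adjacency matrices of the basis relations. -/
noncomputable def adjAlg [Fintype V] [DecidableEq V] (ℛ : Set (Set (V × V))) :
    Subalgebra ℂ (Matrix V V ℂ) :=
  Algebra.adjoin ℂ (adjMat '' ℛ)

/-- `P` is a central primitive idempotent of the (multiplicatively closed) set of
matrices `S`: `P ∈ S` is a nonzero idempotent commuting with everything in `S`, which is
not the sum of two nonzero orthogonal central idempotents of `S`. -/
def IsCPIin [Fintype V] (S : Set (Matrix V V ℂ)) (P : Matrix V V ℂ) : Prop :=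
  P ∈ S ∧ P ≠ 0 ∧ P * P = P ∧ (∀ Q ∈ S, P * Q = Q * P) ∧
  ∀ Q₁ Q₂ : Matrix V V ℂ, Q₁ ∈ S → Q₂ ∈ S →
    Q₁ * Q₁ = Q₁ → Q₂ * Q₂ = Q₂ →
    (∀ M ∈ S, Q₁ * M = M * Q₁) → (∀ M ∈ S, Q₂ * M = M * Q₂) →
    Q₁ * Q₂ = 0 → Q₂ * Q₁ = 0 → P = Q₁ + Q₂ → Q₁ = 0 ∨ Q₂ = 0

/-- `𝒫(𝒞)`: the set of central primitive idempotents of the adjacency algebra. -/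
def CPIs [Fintype V] [DecidableEq V] (ℛ : Set (Set (V × V))) : Set (Matrix V V ℂ) :=
  {P | IsCPIin (adjAlg ℛ : Set (Matrix V V ℂ)) P}

/-- The adjacency algebra `I_X · 𝒜(𝒞) · I_X` of the homogeneous component `𝒞_X`,
as a subset of `Mat_V(ℂ)`. -/
def compAlgSet [Fintype V] [DecidableEq V] (ℛ : Set (Set (V × V))) (X : Set V) :
    Set (Matrix V V ℂ) :=
  {M | ∃ N ∈ adjAlg ℛ, M = idMat X * N * idMat X}

/-- `𝒫(𝒞_X)`: the central primitive idempotents of the homogeneous component `𝒞_X`. -/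
def CPIsComp [Fintype V] [DecidableEq V] (ℛ : Set (Set (V × V))) (X : Set V) :
    Set (Matrix V V ℂ) :=
  {P | IsCPIin (compAlgSet ℛ X) P}

/-- The degree `n_P` of a central primitive idempotent `P` of the algebra (given as the
set `S`): the positive integer with `n_P ^ 2 = dim_ℂ (S · P)`. -/
noncomputable def degOf [Fintype V] [DecidableEq V] (S : Set (Matrix V V ℂ))
    (P : Matrix V V ℂ) : ℕ :=
  Nat.sqrt (Module.finrank ℂ
    (Submodule.span ℂ {M : Matrix V V ℂ | ∃ a ∈ S, M = a * P}))


section Aux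

lemma natCard_set_eq {α : Type*} [Fintype α] (s : Set α) : Nat.card s = s.toFinset.card := by
  rw [Nat.card_eq_fintype_card, Set.toFinset_card]

variable [Fintype V] {ℛ : Set (Set (V × V))}

lemma rel_eq (h : IsCC ℛ) {R S : Set (V × V)} (hR : R ∈ ℛ) (hS : S ∈ ℛ)
    {p : V × V} (hpR : p ∈ R) (hpS : p ∈ S) : R = S :=
  (h.2.1 p).unique ⟨hR, hpR⟩ ⟨hS, hpS⟩

lemma iNum_pos {R S : Set (V × V)} {p : V × V} :
    0 < iNum R S p ↔ ∃ w, (p.1, w) ∈ R ∧ (w, p.2) ∈ S := by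
  rw [iNum, Nat.card_pos_iff]
  constructor
  · rintro ⟨⟨⟨w, hw⟩⟩, -⟩; exact ⟨w, hw⟩
  · rintro ⟨w, hw⟩; exact ⟨⟨⟨w, hw⟩⟩, Subtype.finite⟩

lemma fst_mem_of_rel (h : IsCC ℛ) {X : Set V} (hX : IsFiber ℛ X)
    {R : Set (V × V)} (hR : R ∈ ℛ) {p q : V × V} (hp : p ∈ R) (hq : q ∈ R)
    (hpx : p.1 ∈ X) : q.1 ∈ X := by
  have h1 : 0 < iNum (diag X) R p := by
    rw [iNum_pos]; exact ⟨p.1, ⟨hpx, rfl⟩, hp⟩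
  rw [h.2.2.2.2 (diag X) hX.2 R hR R hR p hp q hq, iNum_pos] at h1
  obtain ⟨w, hw1, -⟩ := h1
  exact hw1.1

lemma snd_mem_of_rel (h : IsCC ℛ) {Y : Set V} (hY : IsFiber ℛ Y)
    {R : Set (V × V)} (hR : R ∈ ℛ) {p q : V × V} (hp : p ∈ R) (hq : q ∈ R)
    (hpy : p.2 ∈ Y) : q.2 ∈ Y := by
  have h1 : 0 < iNum R (diag Y) p := by
    rw [iNum_pos]; exact ⟨p.2, hp, ⟨hpy, rfl⟩⟩
  rw [h.2.2.2.2 R hR (diag Y) hY.2 R hR p hp q hq, iNum_pos] at h1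
  obtain ⟨w, -, hw2⟩ := h1
  rw [← hw2.2]; exact hw2.1

lemma exists_rel (h : IsCC ℛ) {X Y : Set V} (hX : IsFiber ℛ X) (hY : IsFiber ℛ Y)
    {x y : V} (hx : x ∈ X) (hy : y ∈ Y) :
    ∃ R ∈ relsBtw ℛ X Y, (x, y) ∈ R := by
  obtain ⟨R, ⟨hR, hp⟩, -⟩ := h.2.1 (x, y)
  refine ⟨R, ⟨hR, ?_⟩, hp⟩
  rintro ⟨a, b⟩ hab
  exact ⟨fst_mem_of_rel h hX hR hp hab hx, snd_mem_of_rel h hY hR hp hab hy⟩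

lemma outDeg_eq (h : IsCC ℛ) {X Y : Set V} (hX : IsFiber ℛ X)
    {R : Set (V × V)} (hR : R ∈ relsBtw ℛ X Y) {x : V} (hx : x ∈ X) :
    Nat.card {y | (x, y) ∈ R} = outDeg R := by
  have hRne : R.Nonempty := h.1 R hR.1
  rw [outDeg, dif_pos hRne]
  have hp0 : hRne.choose ∈ R := hRne.choose_spec
  have hx0 : hRne.choose.1 ∈ X := (hR.2 hp0).1
  have key : ∀ z : V, iNum R (transp R) (z, z) = Nat.card {y | (z, y) ∈ R} := by
    intro z
    have hset : {w : V | (((z, z) : V × V).1, w) ∈ R ∧ (w, ((z, z) : V × V).2) ∈ transp R}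
        = {y | (z, y) ∈ R} := by
      ext w
      simp [transp, Set.mem_setOf_eq]
    simp only [iNum]
    rw [hset]
  have hc := h.2.2.2.2 R hR.1 (transp R) (h.2.2.2.1 R hR.1) (diag X) hX.2
    (x, x) ⟨hx, rfl⟩ (hRne.choose.1, hRne.choose.1) ⟨hx0, rfl⟩
  rw [key x, key hRne.choose.1] at hc
  exact hc

lemma inDeg_eq (h : IsCC ℛ) {X Y : Set V} (hY : IsFiber ℛ Y)
    {R : Set (V × V)} (hR : R ∈ relsBtw ℛ X Y) {y : V} (hy : y ∈ Y) :
    Nat.card {x | (x, y) ∈ R} = inDeg R := by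
  have hRne : R.Nonempty := h.1 R hR.1
  rw [inDeg, dif_pos hRne]
  have hp0 : hRne.choose ∈ R := hRne.choose_spec
  have hy0 : hRne.choose.2 ∈ Y := (hR.2 hp0).2
  have key : ∀ z : V, iNum (transp R) R (z, z) = Nat.card {x | (x, z) ∈ R} := by
    intro z
    have hset : {w : V | (((z, z) : V × V).1, w) ∈ transp R ∧ (w, ((z, z) : V × V).2) ∈ R}
        = {x | (x, z) ∈ R} := by
      ext w
      simp [transp, Set.mem_setOf_eq]
    simp only [iNum]
    rw [hset]
  have hc := h.2.2.2.2 (transp R) (h.2.2.2.1 R hR.1) R hR.1 (diag Y) hY.2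
    (y, y) ⟨hy, rfl⟩ (hRne.choose.2, hRne.choose.2) ⟨hy0, rfl⟩
  rw [key y, key hRne.choose.2] at hc
  exact hc

lemma outDeg_pos {R : Set (V × V)} (hRne : R.Nonempty) : 0 < outDeg R := by
  rw [outDeg, dif_pos hRne, Nat.card_pos_iff]
  exact ⟨⟨⟨hRne.choose.2, hRne.choose_spec⟩⟩, Subtype.finite⟩

lemma sConst_eq (h : IsCC ℛ) {R S T : Set (V × V)} (hR : R ∈ ℛ) (hS : S ∈ ℛ) (hT : T ∈ ℛ)
    {p : V × V} (hp : p ∈ T) : sConst R S T = iNum R S p := by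
  have hTne : T.Nonempty := ⟨p, hp⟩
  rw [sConst, dif_pos hTne]
  exact h.2.2.2.2 R hR S hS T hT hTne.choose hTne.choose_spec p hp

lemma out_partition (h : IsCC ℛ) {X Y : Set V} (hX : IsFiber ℛ X) (hY : IsFiber ℛ Y)
    {x : V} (hx : x ∈ X) :
    Y.toFinset = (relsBtw ℛ X Y).toFinset.biUnion (fun R => {y | (x, y) ∈ R}.toFinset) := by
  ext y
  simp only [Set.mem_toFinset, Finset.mem_biUnion, Set.mem_setOf_eq]
  constructor
  · intro hy
    obtain ⟨R, hR, hp⟩ := exists_rel h hX hY hx hy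
    exact ⟨R, hR, hp⟩
  · rintro ⟨R, hR, hp⟩
    exact (hR.2 hp).2

lemma out_disj (h : IsCC ℛ) {X Y : Set V} (x : V) :
    ∀ R ∈ (relsBtw ℛ X Y).toFinset, ∀ S ∈ (relsBtw ℛ X Y).toFinset, R ≠ S →
      Disjoint ({y | (x, y) ∈ R}.toFinset) ({y | (x, y) ∈ S}.toFinset) := by
  intro R hR S hS hne
  rw [Finset.disjoint_left]
  intro y hyR hyS
  have h1 : (x, y) ∈ R := by simpa using hyR
  have h2 : (x, y) ∈ S := by simpa using hyS
  exact hne (rel_eq h (Set.mem_toFinset.mp hR : R ∈ relsBtw ℛ X Y).1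
    (Set.mem_toFinset.mp hS : S ∈ relsBtw ℛ X Y).1 h1 h2)

lemma sum_outDeg (h : IsCC ℛ) {X Y : Set V} (hX : IsFiber ℛ X) (hY : IsFiber ℛ Y) :
    ∑ R ∈ (relsBtw ℛ X Y).toFinset, outDeg R = Nat.card Y := by
  obtain ⟨x, hx⟩ := hX.1
  rw [natCard_set_eq, out_partition h hX hY hx,
    Finset.card_biUnion (out_disj h x)]
  apply Finset.sum_congr rfl
  intro R hR
  rw [← outDeg_eq h hX (Set.mem_toFinset.mp hR) hx, natCard_set_eq]

lemma card_rel (h : IsCC ℛ) {X Y : Set V} (hX : IsFiber ℛ X)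
    {R : Set (V × V)} (hR : R ∈ relsBtw ℛ X Y) :
    R.toFinset.card = outDeg R * X.toFinset.card := by
  have hmem : ∀ p ∈ R.toFinset, p.1 ∈ X.toFinset := by
    intro p hp
    exact Set.mem_toFinset.mpr ((hR.2 (Set.mem_toFinset.mp hp)).1)
  rw [Finset.card_eq_sum_card_fiberwise hmem]
  have hfib : ∀ x ∈ X.toFinset,
      (R.toFinset.filter (fun p => p.1 = x)).card = outDeg R := by
    intro x hx
    rw [← outDeg_eq h hX hR (Set.mem_toFinset.mp hx), natCard_set_eq]
    refine Finset.card_bij' (fun p _ => p.2) (fun y _ => (x, y)) ?_ ?_ ?_ ?_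
    · rintro ⟨a, b⟩ hab
      simp only [Finset.mem_filter, Set.mem_toFinset] at hab
      simp only [Set.mem_toFinset, Set.mem_setOf_eq]
      obtain ⟨h1, h2⟩ := hab
      have h2' : a = x := h2
      subst h2'
      exact h1
    · intro y hy
      simp only [Set.mem_toFinset, Set.mem_setOf_eq] at hy
      simp only [Finset.mem_filter, Set.mem_toFinset]
      refine ⟨hy, ?_⟩
      simp
    · rintro ⟨a, b⟩ hab
      simp only [Finset.mem_filter] at hab
      have h2 : a = x := hab.2
      simp [h2]
    · intro y hy; rfl
  rw [Finset.sum_congr rfl hfib, Finset.sum_const, smul_eq_mul, mul_comm]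

lemma card_rel_in (h : IsCC ℛ) {X Y : Set V} (hY : IsFiber ℛ Y)
    {R : Set (V × V)} (hR : R ∈ relsBtw ℛ X Y) :
    R.toFinset.card = inDeg R * Y.toFinset.card := by
  have hmem : ∀ p ∈ R.toFinset, p.2 ∈ Y.toFinset := by
    intro p hp
    exact Set.mem_toFinset.mpr ((hR.2 (Set.mem_toFinset.mp hp)).2)
  rw [Finset.card_eq_sum_card_fiberwise hmem]
  have hfib : ∀ y ∈ Y.toFinset,
      (R.toFinset.filter (fun p => p.2 = y)).card = inDeg R := by
    intro y hy
    rw [← inDeg_eq h hY hR (Set.mem_toFinset.mp hy), natCard_set_eq]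
    refine Finset.card_bij' (fun p _ => p.1) (fun x _ => (x, y)) ?_ ?_ ?_ ?_
    · rintro ⟨a, b⟩ hab
      simp only [Finset.mem_filter, Set.mem_toFinset] at hab
      simp only [Set.mem_toFinset, Set.mem_setOf_eq]
      obtain ⟨h1, h2⟩ := hab
      have h2' : b = y := h2
      subst h2'
      exact h1
    · intro x hx
      simp only [Set.mem_toFinset, Set.mem_setOf_eq] at hx
      simp only [Finset.mem_filter, Set.mem_toFinset]
      refine ⟨hx, ?_⟩
      simp
    · rintro ⟨a, b⟩ hab
      simp only [Finset.mem_filter] at hab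
      have h2 : b = y := hab.2
      simp [h2]
    · intro x hx; rfl
  rw [Finset.sum_congr rfl hfib, Finset.sum_const, smul_eq_mul, mul_comm]

lemma card_filter_fst {α β : Type*} (B : Finset (α × β)) (x : α) (s : Set β)
    {D : DecidablePred (fun q : α × β => q.1 = x)} {F : Fintype s}
    (hmem : ∀ b : β, (x, b) ∈ B ↔ b ∈ s) :
    (@Finset.filter _ (fun q => q.1 = x) D B).card = (@Set.toFinset _ s F).card := by
  refine Finset.card_bij' (fun q _ => q.2) (fun b _ => (x, b)) ?_ ?_ ?_ ?_
  · rintro ⟨a, b⟩ hab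
    rw [Finset.mem_filter] at hab
    have h2 : a = x := hab.2
    rw [Set.mem_toFinset]
    exact (hmem b).mp (h2 ▸ hab.1)
  · intro b hb
    rw [Finset.mem_filter]
    exact ⟨(hmem b).mpr (Set.mem_toFinset.mp hb), rfl⟩
  · rintro ⟨a, b⟩ hab
    rw [Finset.mem_filter] at hab
    have h2 : a = x := hab.2
    simp [h2]
  · intro b hb
    rfl

lemma card_filter_snd {α β : Type*} (B : Finset (α × β)) (y : β) (s : Set α)
    {D : DecidablePred (fun q : α × β => q.2 = y)} {F : Fintype s}
    (hmem : ∀ a : α, (a, y) ∈ B ↔ a ∈ s) :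
    (@Finset.filter _ (fun q => q.2 = y) D B).card = (@Set.toFinset _ s F).card := by
  refine Finset.card_bij' (fun q _ => q.1) (fun a _ => (a, y)) ?_ ?_ ?_ ?_
  · rintro ⟨a, b⟩ hab
    rw [Finset.mem_filter] at hab
    have h2 : b = y := hab.2
    rw [Set.mem_toFinset]
    exact (hmem a).mp (h2 ▸ hab.1)
  · intro a ha
    rw [Finset.mem_filter]
    exact ⟨(hmem a).mpr (Set.mem_toFinset.mp ha), rfl⟩
  · rintro ⟨a, b⟩ hab
    rw [Finset.mem_filter] at hab
    have h2 : b = y := hab.2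
    simp [h2]
  · intro a ha
    rfl

variable {m n r : ℕ}

lemma deg_in_out (h : IsCC ℛ) {X Y : Set V} (hX : IsFiber ℛ X) (hY : IsFiber ℛ Y)
    (hcard : X.toFinset.card = Y.toFinset.card) (hpos : 0 < Y.toFinset.card)
    {T : Set (V × V)} (hT : T ∈ relsBtw ℛ X Y) : inDeg T = outDeg T := by
  have h1 := card_rel h hX hT
  have h2 := card_rel_in h hY hT
  rw [h1, hcard] at h2
  exact (Nat.eq_of_mul_eq_mul_right hpos h2).symm

lemma part_one (h : IsMNRScheme ℛ m n r) (hred : IsReduced ℛ) (hm : m = 2 * r)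
    {X Y : Set V} (hX : IsFiber ℛ X) (hY : IsFiber ℛ Y) (hXY : X ≠ Y) :
    ∀ T ∈ relsBtw ℛ X Y, outDeg T = 2 := by
  obtain ⟨hcc, hbal, hfib, -⟩ := h
  have hXc : X.toFinset.card = m := by rw [← natCard_set_eq, hfib X hX]
  have hYc : Y.toFinset.card = m := by rw [← natCard_set_eq, hfib Y hY]
  have hYpos : 0 < Y.toFinset.card := by
    rw [Finset.card_pos]
    obtain ⟨y, hy⟩ := hY.1
    exact ⟨y, Set.mem_toFinset.mpr hy⟩
  have hge : ∀ T ∈ relsBtw ℛ X Y, 2 ≤ outDeg T := by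
    intro T hT
    have hdpos : 0 < outDeg T := outDeg_pos (hcc.1 T hT.1)
    by_contra hlt
    push_neg at hlt
    have hd1 : outDeg T = 1 := by omega
    have he1 : inDeg T = 1 := by
      rw [deg_in_out hcc hX hY (hXc.trans hYc.symm) hYpos hT, hd1]
    exact hred X Y hX hY hXY T hT ⟨hd1, he1⟩
  have hsum : ∑ T ∈ (relsBtw ℛ X Y).toFinset, outDeg T = 2 * r := by
    rw [sum_outDeg hcc hX hY, hfib Y hY, hm]
  have hcardS : (relsBtw ℛ X Y).toFinset.card = r := by
    rw [← natCard_set_eq, hbal X Y hX hY]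
  intro T hT
  by_contra hne
  have hkey : ∑ S ∈ (relsBtw ℛ X Y).toFinset, (2 : ℕ)
      < ∑ S ∈ (relsBtw ℛ X Y).toFinset, outDeg S := by
    refine Finset.sum_lt_sum (fun S hS => hge S (Set.mem_toFinset.mp hS))
      ⟨T, Set.mem_toFinset.mpr hT, ?_⟩
    have := hge T hT
    omega
  rw [Finset.sum_const, smul_eq_mul, hcardS, hsum] at hkey
  omega

lemma triangle (hcc : IsCC ℛ) {X Y : Set V} (hX : IsFiber ℛ X) (hY : IsFiber ℛ Y)
    {R T T' : Set (V × V)} (hR : R ∈ relsBtw ℛ X X) (hT : T ∈ relsBtw ℛ X Y)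
    (hT' : T' ∈ relsBtw ℛ X Y) :
    outDeg R * sConst T (transp T') R = outDeg T * sConst R T' T := by
  have htr : transp T' ∈ ℛ := hcc.2.2.2.1 T' hT'.1
  set PA : (V × V) × V → Prop :=
    fun q => q.1 ∈ R ∧ (q.1.1, q.2) ∈ T ∧ (q.1.2, q.2) ∈ T' with hPA
  set PB : (V × V) × V → Prop :=
    fun q => q.1 ∈ T ∧ (q.1.1, q.2) ∈ R ∧ (q.2, q.1.2) ∈ T' with hPB
  have hAB : {q | PA q}.toFinset.card = {q | PB q}.toFinset.card := by
    refine Finset.card_bij' (fun q _ => ((q.1.1, q.2), q.1.2))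
      (fun q _ => ((q.1.1, q.2), q.1.2)) ?_ ?_ ?_ ?_
    · rintro ⟨⟨a, b⟩, c⟩ hq
      simp only [Set.mem_toFinset, Set.mem_setOf_eq, hPA, hPB] at hq ⊢
      exact ⟨hq.2.1, hq.1, hq.2.2⟩
    · rintro ⟨⟨a, b⟩, c⟩ hq
      simp only [Set.mem_toFinset, Set.mem_setOf_eq, hPA, hPB] at hq ⊢
      exact ⟨hq.2.1, hq.1, hq.2.2⟩
    · rintro ⟨⟨a, b⟩, c⟩ hq; rfl
    · rintro ⟨⟨a, b⟩, c⟩ hq; rfl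
  have hA : {q | PA q}.toFinset.card = R.toFinset.card * sConst T (transp T') R := by
    have hmem : ∀ q ∈ {q | PA q}.toFinset, q.1 ∈ R.toFinset := by
      intro q hq
      exact Set.mem_toFinset.mpr (Set.mem_toFinset.mp hq).1
    rw [Finset.card_eq_sum_card_fiberwise hmem]
    have hfibc : ∀ p ∈ R.toFinset,
        ({q | PA q}.toFinset.filter (fun q => q.1 = p)).card = sConst T (transp T') R := by
      intro p hp
      have hpR : p ∈ R := Set.mem_toFinset.mp hp
      have hc : sConst T (transp T') R
          = Nat.card {w : V | (p.1, w) ∈ T ∧ (w, p.2) ∈ transp T'} :=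
        sConst_eq hcc hT.1 htr hR.1 hpR
      rw [natCard_set_eq] at hc
      rw [hc]
      apply card_filter_fst
      intro b
      simp only [Set.mem_toFinset, Set.mem_setOf_eq, hPA, transp, Set.mem_preimage,
        Prod.swap_prod_mk, hpR]
      tauto
    rw [Finset.sum_congr rfl hfibc, Finset.sum_const, smul_eq_mul]
  have hB : {q | PB q}.toFinset.card = T.toFinset.card * sConst R T' T := by
    have hmem : ∀ q ∈ {q | PB q}.toFinset, q.1 ∈ T.toFinset := by
      intro q hq
      exact Set.mem_toFinset.mpr (Set.mem_toFinset.mp hq).1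
    rw [Finset.card_eq_sum_card_fiberwise hmem]
    have hfibc : ∀ p ∈ T.toFinset,
        ({q | PB q}.toFinset.filter (fun q => q.1 = p)).card = sConst R T' T := by
      intro p hp
      have hpT : p ∈ T := Set.mem_toFinset.mp hp
      have hc : sConst R T' T
          = Nat.card {w : V | (p.1, w) ∈ R ∧ (w, p.2) ∈ T'} :=
        sConst_eq hcc hR.1 hT'.1 hT.1 hpT
      rw [natCard_set_eq] at hc
      rw [hc]
      apply card_filter_fst
      intro b
      simp only [Set.mem_toFinset, Set.mem_setOf_eq, hPB, hpT]
      tauto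
    rw [Finset.sum_congr rfl hfibc, Finset.sum_const, smul_eq_mul]
  have hXpos : 0 < X.toFinset.card := by
    rw [Finset.card_pos]
    obtain ⟨x, hx⟩ := hX.1
    exact ⟨x, Set.mem_toFinset.mpr hx⟩
  have heq : outDeg R * X.toFinset.card * sConst T (transp T') R
      = outDeg T * X.toFinset.card * sConst R T' T := by
    rw [← card_rel hcc hX hR, ← card_rel hcc hX hT, ← hA, ← hB, hAB]
  refine Nat.eq_of_mul_eq_mul_right hXpos ?_
  calc outDeg R * sConst T (transp T') R * X.toFinset.card
      = outDeg R * X.toFinset.card * sConst T (transp T') R := by ring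
    _ = outDeg T * X.toFinset.card * sConst R T' T := heq
    _ = outDeg T * sConst R T' T * X.toFinset.card := by ring

lemma key_sum (h : IsMNRScheme ℛ m n r) (hred : IsReduced ℛ) (hm : m = 2 * r)
    {X Y : Set V} (hX : IsFiber ℛ X) (hY : IsFiber ℛ Y) (hXY : X ≠ Y)
    {T T' : Set (V × V)} (hT : T ∈ relsBtw ℛ X Y) (hT' : T' ∈ relsBtw ℛ X Y)
    {x : V} (hx : x ∈ X) :
    ∑ R ∈ (relsBtw ℛ X X).toFinset, sConst T (transp T') R * outDeg R = 4 := by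
  have hcc := h.1
  have htr : transp T' ∈ ℛ := hcc.2.2.2.1 T' hT'.1
  have hXc : X.toFinset.card = m := by rw [← natCard_set_eq, h.2.2.1 X hX]
  have hYc : Y.toFinset.card = m := by rw [← natCard_set_eq, h.2.2.1 Y hY]
  have hYpos : 0 < Y.toFinset.card := by
    rw [Finset.card_pos]
    obtain ⟨y, hy⟩ := hY.1
    exact ⟨y, Set.mem_toFinset.mpr hy⟩
  have hdT : outDeg T = 2 := part_one ⟨hcc, h.2.1, h.2.2.1, h.2.2.2⟩ hred hm hX hY hXY T hT
  have heT' : inDeg T' = 2 := by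
    rw [deg_in_out hcc hX hY (hXc.trans hYc.symm) hYpos hT']
    exact part_one ⟨hcc, h.2.1, h.2.2.1, h.2.2.2⟩ hred hm hX hY hXY T' hT'
  set P : V × V → Prop := fun q => (x, q.2) ∈ T ∧ (q.1, q.2) ∈ T' with hP
  have hcount1 : {q | P q}.toFinset.card = 4 := by
    have hmem : ∀ q ∈ {q | P q}.toFinset, q.2 ∈ {y | (x, y) ∈ T}.toFinset := by
      intro q hq
      exact Set.mem_toFinset.mpr (Set.mem_toFinset.mp hq).1
    rw [Finset.card_eq_sum_card_fiberwise hmem]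
    have hfibc : ∀ y ∈ {y | (x, y) ∈ T}.toFinset,
        ({q | P q}.toFinset.filter (fun q => q.2 = y)).card = 2 := by
      intro y hy
      have hyT : (x, y) ∈ T := by simpa using hy
      have hyY : y ∈ Y := (hT.2 hyT).2
      have hc : {a : V | (a, y) ∈ T'}.toFinset.card = 2 := by
        rw [← natCard_set_eq, inDeg_eq hcc hY hT' hyY, heT']
      rw [← hc]
      apply card_filter_snd
      intro a
      simp only [Set.mem_toFinset, Set.mem_setOf_eq, hP, hyT]
      tauto
    rw [Finset.sum_congr rfl hfibc, Finset.sum_const, smul_eq_mul]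
    have hTout : {y | (x, y) ∈ T}.toFinset.card = 2 := by
      rw [← natCard_set_eq, outDeg_eq hcc hX hT hx, hdT]
    rw [hTout]
  have hmem : ∀ q ∈ {q | P q}.toFinset, q.1 ∈ X.toFinset := by
    intro q hq
    exact Set.mem_toFinset.mpr ((hT'.2 (Set.mem_toFinset.mp hq).2).1)
  rw [← hcount1, Finset.card_eq_sum_card_fiberwise hmem,
    out_partition hcc hX hX hx, Finset.sum_biUnion ?hdisj]
  case hdisj =>
    intro R hR S hS hne
    exact out_disj hcc x R (by simpa using hR) S (by simpa using hS) hne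
  apply Finset.sum_congr rfl
  intro R hR
  have hRmem : R ∈ relsBtw ℛ X X := Set.mem_toFinset.mp hR
  have hinner : ∀ x' ∈ {y | (x, y) ∈ R}.toFinset,
      ({q | P q}.toFinset.filter (fun q => q.1 = x')).card = sConst T (transp T') R := by
    intro x' hx'
    have hx'R : (x, x') ∈ R := by simpa using hx'
    have hc : sConst T (transp T') R
        = Nat.card {w : V | (x, w) ∈ T ∧ (w, x') ∈ transp T'} :=
      sConst_eq hcc hT.1 htr hRmem.1 hx'R
    rw [natCard_set_eq] at hc
    rw [hc]
    apply card_filter_fst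
    intro b
    simp only [Set.mem_toFinset, Set.mem_setOf_eq, hP, transp, Set.mem_preimage,
      Prod.swap_prod_mk]
  rw [Finset.sum_congr rfl hinner, Finset.sum_const, smul_eq_mul,
    ← natCard_set_eq, outDeg_eq hcc hX hRmem hx, mul_comm]

lemma part_two (h : IsMNRScheme ℛ m n r) (hred : IsReduced ℛ) (hm : m = 2 * r)
    {X Y : Set V} (hX : IsFiber ℛ X) (hY : IsFiber ℛ Y) (hXY : X ≠ Y) :
    ∀ R ∈ relsBtw ℛ X X, outDeg R = 1 ∨ outDeg R = 2 ∨ outDeg R = 4 := by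
  intro R hR
  have hcc := h.1
  obtain ⟨p, hp⟩ : R.Nonempty := hcc.1 R hR.1
  have hx : p.1 ∈ X := (hR.2 hp).1
  have hx' : p.2 ∈ X := (hR.2 hp).2
  obtain ⟨y, hy⟩ := hY.1
  obtain ⟨T, hT, hxy⟩ := exists_rel hcc hX hY hx hy
  obtain ⟨T', hT', hx'y⟩ := exists_rel hcc hX hY hx' hy
  have htr : transp T' ∈ ℛ := hcc.2.2.2.1 T' hT'.1
  have hc1 : 0 < sConst T (transp T') R := by
    rw [sConst_eq hcc hT.1 htr hR.1 hp, iNum_pos]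
    exact ⟨y, hxy, hx'y⟩
  have hsum := key_sum h hred hm hX hY hXY hT hT' hx
  have hle : sConst T (transp T') R * outDeg R ≤ 4 := by
    rw [← hsum]
    exact Finset.single_le_sum (f := fun S => sConst T (transp T') S * outDeg S)
      (fun S _ => Nat.zero_le _) (Set.mem_toFinset.mpr hR)
  have htri := triangle hcc hX hY hR hT hT'
  have hdT : outDeg T = 2 := part_one h hred hm hX hY hXY T hT
  rw [hdT] at htri
  have hdle : outDeg R ≤ 4 :=
    le_trans (Nat.le_mul_of_pos_left (outDeg R) hc1) hle
  have hpos : 0 < outDeg R := outDeg_pos ⟨p, hp⟩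
  rcases (by omega : outDeg R = 1 ∨ outDeg R = 2 ∨ outDeg R = 3 ∨ outDeg R = 4) with
    h1 | h1 | h1 | h1
  · exact Or.inl h1
  · exact Or.inr (Or.inl h1)
  · rw [h1] at hle htri
    omega
  · exact Or.inr (Or.inr h1)

lemma part_three (h : IsMNRScheme ℛ m n r) (hred : IsReduced ℛ) (hm : m = 2 * r)
    {X Y : Set V} (hX : IsFiber ℛ X) (hY : IsFiber ℛ Y) (hXY : X ≠ Y) :
    Nat.card {R : Set (V × V) | R ∈ relsBtw ℛ X X ∧ outDeg R = 1} =
      2 * Nat.card {R : Set (V × V) | R ∈ relsBtw ℛ X X ∧ outDeg R = 4} := by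
  have hcc := h.1
  have hdeg := part_two h hred hm hX hY hXY
  have hcardT : (relsBtw ℛ X X).toFinset.card = r := by
    rw [← natCard_set_eq, h.2.1 X X hX hX]
  have hsum : ∑ R ∈ (relsBtw ℛ X X).toFinset, outDeg R = 2 * r := by
    rw [sum_outDeg hcc hX hX, h.2.2.1 X hX, hm]
  set A := (relsBtw ℛ X X).toFinset.filter (fun R => outDeg R = 1) with hA
  set B := (relsBtw ℛ X X).toFinset.filter (fun R => outDeg R = 2) with hB
  set C := (relsBtw ℛ X X).toFinset.filter (fun R => outDeg R = 4) with hC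
  have hU : (relsBtw ℛ X X).toFinset = (A ∪ B) ∪ C := by
    ext R
    simp only [hA, hB, hC, Finset.mem_union, Finset.mem_filter]
    constructor
    · intro hR
      rcases hdeg R (Set.mem_toFinset.mp hR) with h1 | h1 | h1
      · exact Or.inl (Or.inl ⟨hR, h1⟩)
      · exact Or.inl (Or.inr ⟨hR, h1⟩)
      · exact Or.inr ⟨hR, h1⟩
    · rintro ((⟨h1, -⟩ | ⟨h1, -⟩) | ⟨h1, -⟩) <;> exact h1
  have hdisjAB : Disjoint A B := by
    rw [Finset.disjoint_left]
    intro R h1 h2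
    rw [hA, Finset.mem_filter] at h1
    rw [hB, Finset.mem_filter] at h2
    omega
  have hdisjABC : Disjoint (A ∪ B) C := by
    rw [Finset.disjoint_left]
    intro R h1 h2
    rw [hC, Finset.mem_filter] at h2
    rw [Finset.mem_union, hA, hB, Finset.mem_filter, Finset.mem_filter] at h1
    rcases h1 with h1 | h1 <;> omega
  have hcards : A.card + B.card + C.card = r := by
    rw [← hcardT, hU, Finset.card_union_of_disjoint hdisjABC,
      Finset.card_union_of_disjoint hdisjAB]
  have hsA : ∑ R ∈ A, outDeg R = A.card * 1 := by
    have hval : ∀ R ∈ A, outDeg R = 1 := by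
      intro R hR
      rw [hA, Finset.mem_filter] at hR
      exact hR.2
    rw [Finset.sum_congr rfl hval, Finset.sum_const, smul_eq_mul]
  have hsB : ∑ R ∈ B, outDeg R = B.card * 2 := by
    have hval : ∀ R ∈ B, outDeg R = 2 := by
      intro R hR
      rw [hB, Finset.mem_filter] at hR
      exact hR.2
    rw [Finset.sum_congr rfl hval, Finset.sum_const, smul_eq_mul]
  have hsC : ∑ R ∈ C, outDeg R = C.card * 4 := by
    have hval : ∀ R ∈ C, outDeg R = 4 := by
      intro R hR
      rw [hC, Finset.mem_filter] at hR
      exact hR.2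
    rw [Finset.sum_congr rfl hval, Finset.sum_const, smul_eq_mul]
  have hsums : A.card * 1 + B.card * 2 + C.card * 4 = 2 * r := by
    rw [← hsum, hU, Finset.sum_union hdisjABC, Finset.sum_union hdisjAB, hsA, hsB, hsC]
  have hNA : Nat.card {R : Set (V × V) | R ∈ relsBtw ℛ X X ∧ outDeg R = 1} = A.card := by
    have hset : {R : Set (V × V) | R ∈ relsBtw ℛ X X ∧ outDeg R = 1} = ↑A := by
      ext R
      simp only [Set.mem_setOf_eq, hA, Finset.coe_filter, Set.mem_toFinset]
    rw [Nat.card_coe_set_eq, hset, Set.ncard_coe_finset]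
  have hNC : Nat.card {R : Set (V × V) | R ∈ relsBtw ℛ X X ∧ outDeg R = 4} = C.card := by
    have hset : {R : Set (V × V) | R ∈ relsBtw ℛ X X ∧ outDeg R = 4} = ↑C := by
      ext R
      simp only [Set.mem_setOf_eq, hC, Finset.coe_filter, Set.mem_toFinset]
    rw [Nat.card_coe_set_eq, hset, Set.ncard_coe_finset]
  rw [hNA, hNC]
  omega

end Aux


/-- **Theorem (Statement 17).** Let `𝒞` be a reduced `(m,n,r)`-scheme with `m = 2r` and
let `X ≠ Y` be fibers. Then every `T ∈ ℛ_{X,Y}` has `d_T = 2`; every `R ∈ ℛ_X` has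
`d_R ∈ {1,2,4}`; and the number of `R ∈ ℛ_X` with `d_R = 1` is twice the number with
`d_R = 4`. -/
theorem reduced_m_eq_two_r
    {V : Type*} [Fintype V] [Nonempty V]
    (ℛ : Set (Set (V × V))) (m n r : ℕ) (h : IsMNRScheme ℛ m n r) (hred : IsReduced ℛ)
    (hm : m = 2 * r)
    (X Y : Set V) (hX : IsFiber ℛ X) (hY : IsFiber ℛ Y) (hXY : X ≠ Y) :
    (∀ T ∈ relsBtw ℛ X Y, outDeg T = 2) ∧
    (∀ R ∈ relsBtw ℛ X X, outDeg R = 1 ∨ outDeg R = 2 ∨ outDeg R = 4) ∧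
    Nat.card {R : Set (V × V) | R ∈ relsBtw ℛ X X ∧ outDeg R = 1} =
      2 * Nat.card {R : Set (V × V) | R ∈ relsBtw ℛ X X ∧ outDeg R = 4} := by
  exact ⟨part_one h hred hm hX hY hXY, part_two h hred hm hX hY hXY,
    part_three h hred hm hX hY hXY⟩

end CCPaper
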